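/- The inverse discrete frequency Zak transform of a pulsone-modulated signal satisfies: if x[n] = Σ_{k₀=0}^{M-1} Σ_{l₀=0}^{N-1} X[k₀,l₀] p_{(k₀,l₀)}[n], then the DFT coefficient s[i] = (1/√(MN)) Σ_{n=0}^{MN-1} e^{-2πi i n/(MN)} x[n] equals (1/√M) Σ_{k₀=0}^{M-1} X[k₀, i mod N] e^{-2πi i k₀/(MN)} for every 0 ≤ i ≤ MN-1. -/

import Mathlib

open Complex

/-- The discrete-time pulsone, in closed form on ℤ. -/
noncomputable def pulsone (M N k₀ l₀ : ℕ) (n : ℤ) : ℂ :=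
  if n % (M : ℤ) = (k₀ : ℤ) then
    (1 / (Real.sqrt N : ℂ)) *
      Complex.exp (2 * Real.pi * Complex.I * (((n - (k₀ : ℤ)) / (M : ℤ) : ℤ) : ℂ) * l₀ / N)
  else 0

lemma sum_range_mul_reindex (M N : ℕ) (hM : 0 < M) (f : ℕ → ℂ) :
    ∑ n ∈ Finset.range (M * N), f n
      = ∑ k ∈ Finset.range M, ∑ d ∈ Finset.range N, f (k + d * M) := by
  rw [← Finset.sum_product']
  apply Finset.sum_nbij' (fun n => (n % M, n / M)) (fun p => p.1 + p.2 * M)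
  · intro n hn
    simp only [Finset.mem_range, Finset.mem_product] at *
    exact ⟨Nat.mod_lt _ hM, Nat.div_lt_of_lt_mul (by omega)⟩
  · intro p hp
    simp only [Finset.mem_range, Finset.mem_product] at *
    obtain ⟨h1, h2⟩ := hp
    calc p.1 + p.2 * M < M + p.2 * M := by omega
      _ ≤ M + (N - 1) * M := by
          have : p.2 ≤ N - 1 := by omega
          nlinarith
      _ ≤ M * N := by
          have : M + (N-1) * M = (1 + (N-1)) * M := by ring
          rw [this]
          have : 1 + (N - 1) = N := by omega
          rw [this, Nat.mul_comm]
  · intro n _; exact Nat.mod_add_div' n M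
  · intro p hp
    simp only [Finset.mem_range, Finset.mem_product] at hp
    ext
    · simp [Nat.add_mul_mod_self_right, Nat.mod_eq_of_lt hp.1]
    · simp [Nat.add_mul_div_right _ _ hM, Nat.div_eq_of_lt hp.1]
  · intro n _; rw [Nat.mod_add_div']

lemma pulsone_apply (M N k₀ l₀ k d : ℕ) (hM : 0 < M) (hk : k < M) (hk₀ : k₀ < M) :
    pulsone M N k₀ l₀ ((k + d * M : ℕ) : ℤ)
      = if k = k₀ then (1 / (Real.sqrt N : ℂ)) *
          Complex.exp (2 * Real.pi * Complex.I * (d : ℂ) * l₀ / N) else 0 := by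
  unfold pulsone
  have h1 : ((k + d * M : ℕ) : ℤ) % (M : ℤ) = (k : ℤ) := by
    push_cast
    rw [Int.add_mul_emod_self_right, Int.emod_eq_of_lt (by exact_mod_cast Nat.zero_le k)
      (by exact_mod_cast hk)]
  rw [h1]
  by_cases h : k = k₀
  · subst h
    rw [if_pos rfl, if_pos rfl]
    have h2 : (((k : ℕ) + d * M : ℕ) : ℤ) - (k : ℤ) = (d : ℤ) * (M : ℤ) := by push_cast; ring
    rw [h2, Int.mul_ediv_cancel _ (by exact_mod_cast hM.ne')]
    norm_num
  · rw [if_neg (by exact_mod_cast h), if_neg (by exact_mod_cast h)]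

lemma geom_exp_sum (N : ℕ) (hN : 0 < N) (j : ℤ) :
    ∑ d ∈ Finset.range N, Complex.exp (2 * Real.pi * Complex.I * j * d / N)
      = if (N : ℤ) ∣ j then (N : ℂ) else 0 := by
  have hNc : (N : ℂ) ≠ 0 := by exact_mod_cast hN.ne'
  set z : ℂ := Complex.exp (2 * Real.pi * Complex.I * j / N) with hz
  have hterm : ∀ d : ℕ, Complex.exp (2 * Real.pi * Complex.I * j * d / N) = z ^ d := by
    intro d
    rw [hz, ← Complex.exp_nat_mul]
    ring_nf
  simp only [hterm]
  have hzN : z ^ N = 1 := by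
    rw [hz, ← Complex.exp_nat_mul]
    have : (N : ℂ) * (2 * Real.pi * Complex.I * j / N) = (j : ℂ) * (2 * Real.pi * Complex.I) := by
      field_simp
    rw [this]
    exact_mod_cast Complex.exp_int_mul_two_pi_mul_I j
  by_cases hdvd : (N : ℤ) ∣ j
  · obtain ⟨m, hm⟩ := hdvd
    have hz1 : z = 1 := by
      rw [hz, hm]
      have : 2 * (Real.pi : ℂ) * Complex.I * ((N : ℤ) * m : ℤ) / N
          = (m : ℂ) * (2 * Real.pi * Complex.I) := by push_cast; field_simp
      rw [this]
      exact_mod_cast Complex.exp_int_mul_two_pi_mul_I m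
    simp [hz1, hm]
  · rw [if_neg hdvd]
    have hz1 : z ≠ 1 := by
      intro hz1
      rw [hz, Complex.exp_eq_one_iff] at hz1
      obtain ⟨n, hn⟩ := hz1
      apply hdvd
      have hpi : (Real.pi : ℂ) ≠ 0 := by exact_mod_cast Real.pi_ne_zero
      have h2 : (2 : ℂ) * Real.pi * Complex.I ≠ 0 :=
        mul_ne_zero (mul_ne_zero two_ne_zero hpi) Complex.I_ne_zero
      have hj : (j : ℂ) = (n : ℂ) * N := by
        field_simp at hn
        apply mul_left_cancel₀ h2
        linear_combination (2 * (Real.pi : ℂ) * Complex.I) * hn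
      exact ⟨n, by exact_mod_cast hj.trans (mul_comm _ _)⟩
    rw [geom_sum_eq hz1, hzN]
    simp

theorem idfzt_of_pulsone_signal (M N : ℕ) (hM : 0 < M) (hN : 0 < N)
    (X : ℕ → ℕ → ℂ)
    (x : ℕ → ℂ)
    (hx : ∀ n, x n = ∑ k₀ ∈ Finset.range M, ∑ l₀ ∈ Finset.range N,
        X k₀ l₀ * pulsone M N k₀ l₀ (n : ℤ))
    (s : ℕ → ℂ)
    (hs : ∀ i, s i = (1 / (Real.sqrt (M * N) : ℂ)) * ∑ n ∈ Finset.range (M * N),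
        Complex.exp (-(2 * Real.pi * Complex.I * i * n / (M * N))) * x n)
    (i : ℕ) (hi : i ≤ M * N - 1) :
    s i = (1 / (Real.sqrt M : ℂ)) * ∑ k₀ ∈ Finset.range M,
        X k₀ (i % N) * Complex.exp (-(2 * Real.pi * Complex.I * i * k₀ / (M * N))) := by
  have hMc : (M : ℂ) ≠ 0 := by exact_mod_cast hM.ne'
  have hNc : (N : ℂ) ≠ 0 := by exact_mod_cast hN.ne'
  have hsN : (0:ℝ) < Real.sqrt N := Real.sqrt_pos.mpr (by exact_mod_cast hN)
  have hsM : (0:ℝ) < Real.sqrt M := Real.sqrt_pos.mpr (by exact_mod_cast hM)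
  have hsNc : (Real.sqrt N : ℂ) ≠ 0 := by exact_mod_cast hsN.ne'
  have hsMc : (Real.sqrt M : ℂ) ≠ 0 := by exact_mod_cast hsM.ne'
  have hNsq : (Real.sqrt N : ℂ) * (Real.sqrt N : ℂ) = (N : ℂ) := by
    rw [← Complex.ofReal_mul, Real.mul_self_sqrt (Nat.cast_nonneg N)]; norm_cast
  have hxval : ∀ k, k < M → ∀ d : ℕ, x (k + d * M)
      = ∑ l₀ ∈ Finset.range N, X k l₀ * ((1 / (Real.sqrt N : ℂ)) *
          Complex.exp (2 * Real.pi * Complex.I * (d : ℂ) * l₀ / N)) := by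
    intro k hk d
    rw [hx]
    rw [Finset.sum_eq_single_of_mem k (Finset.mem_range.mpr hk)]
    · apply Finset.sum_congr rfl
      intro l₀ _
      rw [pulsone_apply M N k l₀ k d hM hk hk, if_pos rfl]
    · intro k₀ hk₀ hne
      apply Finset.sum_eq_zero
      intro l₀ _
      rw [pulsone_apply M N k₀ l₀ k d hM hk (Finset.mem_range.mp hk₀),
        if_neg (fun h => hne h.symm), mul_zero]
  have hEsplit : ∀ k d l₀ : ℕ,
      Complex.exp (-(2 * Real.pi * Complex.I * i * ((k + d * M : ℕ) : ℂ) / (M * N))) *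
        Complex.exp (2 * Real.pi * Complex.I * (d : ℂ) * l₀ / N)
      = Complex.exp (-(2 * Real.pi * Complex.I * i * k / (M * N))) *
        Complex.exp (2 * Real.pi * Complex.I * ((((l₀ : ℤ) - (i : ℤ)) : ℤ) : ℂ) * d / N) := by
    intro k d l₀
    rw [← Complex.exp_add, ← Complex.exp_add]
    congr 1
    push_cast
    field_simp
    ring
  have step : ∀ k ∈ Finset.range M,
      ∑ d ∈ Finset.range N,
        Complex.exp (-(2 * Real.pi * Complex.I * i * ((k + d * M : ℕ) : ℂ) / (M * N))) *
          x (k + d * M)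
      = ((N : ℂ) / (Real.sqrt N : ℂ)) *
          (X k (i % N) * Complex.exp (-(2 * Real.pi * Complex.I * i * k / (M * N)))) := by
    intro k hk
    rw [Finset.mem_range] at hk
    have h1 : ∀ d : ℕ,
        Complex.exp (-(2 * Real.pi * Complex.I * i * ((k + d * M : ℕ) : ℂ) / (M * N))) *
          x (k + d * M)
        = ∑ l₀ ∈ Finset.range N,
            (X k l₀ * (1 / (Real.sqrt N : ℂ)) *
              Complex.exp (-(2 * Real.pi * Complex.I * i * k / (M * N)))) *
            Complex.exp (2 * Real.pi * Complex.I * ((((l₀ : ℤ) - (i : ℤ)) : ℤ) : ℂ) * d / N) := by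
      intro d
      rw [hxval k hk d, Finset.mul_sum]
      apply Finset.sum_congr rfl
      intro l₀ _
      calc Complex.exp (-(2 * Real.pi * Complex.I * i * ((k + d * M : ℕ) : ℂ) / (M * N))) *
            (X k l₀ * ((1 / (Real.sqrt N : ℂ)) *
              Complex.exp (2 * Real.pi * Complex.I * (d : ℂ) * l₀ / N)))
          = (X k l₀ * (1 / (Real.sqrt N : ℂ))) *
            (Complex.exp (-(2 * Real.pi * Complex.I * i * ((k + d * M : ℕ) : ℂ) / (M * N))) *
              Complex.exp (2 * Real.pi * Complex.I * (d : ℂ) * l₀ / N)) := by ring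
        _ = _ := by rw [hEsplit k d l₀]; ring
    simp only [h1]
    rw [Finset.sum_comm]
    have h2 : ∀ l₀ ∈ Finset.range N,
        ∑ d ∈ Finset.range N,
          (X k l₀ * (1 / (Real.sqrt N : ℂ)) *
            Complex.exp (-(2 * Real.pi * Complex.I * i * k / (M * N)))) *
          Complex.exp (2 * Real.pi * Complex.I * ((((l₀ : ℤ) - (i : ℤ)) : ℤ) : ℂ) * d / N)
        = (X k l₀ * (1 / (Real.sqrt N : ℂ)) *
            Complex.exp (-(2 * Real.pi * Complex.I * i * k / (M * N)))) *
          (if (N : ℤ) ∣ ((l₀ : ℤ) - (i : ℤ)) then (N : ℂ) else 0) := by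
      intro l₀ _
      rw [← Finset.mul_sum, geom_exp_sum N hN ((l₀ : ℤ) - (i : ℤ))]
    rw [Finset.sum_congr rfl h2]
    rw [Finset.sum_eq_single_of_mem (i % N) (Finset.mem_range.mpr (Nat.mod_lt _ hN))]
    · have hdvd : (N : ℤ) ∣ (((i % N : ℕ) : ℤ) - (i : ℤ)) := by
        refine ⟨-((i / N : ℕ) : ℤ), ?_⟩
        have h := Nat.mod_add_div i N
        have h' : ((i % N : ℕ) : ℤ) + (N : ℤ) * ((i / N : ℕ) : ℤ) = (i : ℤ) := by
          exact_mod_cast h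
        linarith
      rw [if_pos hdvd]
      ring
    · intro l₀ hl₀ hne
      rw [Finset.mem_range] at hl₀
      rw [if_neg, mul_zero]
      intro hdvd
      apply hne
      have hmod : (i : ℤ) % (N : ℤ) = (l₀ : ℤ) % (N : ℤ) := Int.modEq_iff_dvd.mpr hdvd
      have hlm : (l₀ : ℤ) % (N : ℤ) = (l₀ : ℤ) :=
        Int.emod_eq_of_lt (by exact_mod_cast Nat.zero_le l₀) (by exact_mod_cast hl₀)
      have him : (i : ℤ) % (N : ℤ) = ((i % N : ℕ) : ℤ) := by push_cast; ring
      exact_mod_cast (hlm.symm.trans hmod.symm).trans him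
  rw [hs, sum_range_mul_reindex M N hM, Finset.sum_congr rfl step, ← Finset.mul_sum,
    ← mul_assoc]
  congr 1
  have hsqMN : Real.sqrt ((M : ℝ) * (N : ℝ)) = Real.sqrt M * Real.sqrt N :=
    Real.sqrt_mul (Nat.cast_nonneg M) _
  rw [hsqMN, Complex.ofReal_mul]
  field_simp
  linear_combination (-1 : ℂ) * hNsq
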